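/- Let X ∈ ℝ^{m×n}, Ω ∈ ℝ^{n×s}, Ψ ∈ ℝ^{t×m}, and set Y = XΩ, Z = ΨX. If rank(ΨXΩ) = rank(X), then the generalized Nyström approximation is exact: X = Y (ΨXΩ)† Z, where † denotes the Moore–Penrose pseudoinverse. -/

import Mathlib

open Matrix

/-- If `(A * B).rank = A.rank`, then `A` factors as `A = (A * B) * W`. -/
lemma factor_of_rank_eq {m n k : ℕ}
    (A : Matrix (Fin m) (Fin n) ℝ) (B : Matrix (Fin n) (Fin k) ℝ)
    (h : (A * B).rank = A.rank) :
    ∃ W : Matrix (Fin k) (Fin n) ℝ, A = (A * B) * W := by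
  have hle : LinearMap.range (A * B).mulVecLin ≤ LinearMap.range A.mulVecLin := by
    rw [Matrix.mulVecLin_mul]
    exact LinearMap.range_comp_le_range _ _
  have heq : LinearMap.range (A * B).mulVecLin = LinearMap.range A.mulVecLin :=
    Submodule.eq_of_le_of_finrank_eq hle h
  have hcol : ∀ j : Fin n, ∃ v : Fin k → ℝ, (A * B) *ᵥ v = fun i => A i j := by
    intro j
    have : (fun i => A i j) ∈ LinearMap.range A.mulVecLin := by
      exact ⟨Pi.single j 1, by
        funext i
        simp [Matrix.mulVecLin_apply, Matrix.mulVec, dotProduct, Pi.single_apply]⟩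
    rw [← heq] at this
    obtain ⟨v, hv⟩ := this
    exact ⟨v, hv⟩
  choose v hv using hcol
  refine ⟨Matrix.of fun i j => v j i, ?_⟩
  funext i j
  have := congrFun (hv j) i
  simpa [Matrix.mulVec, Matrix.mul_apply, dotProduct] using this.symm

/-- Generalized Nyström exactness: if `Y = XΩ`, `Z = ΨX`, `P` is the
Moore–Penrose pseudoinverse of `ΨXΩ` (characterized by the four Penrose conditions),
and `rank (ΨXΩ) = rank X`, then `X = Y * P * Z`. -/
theorem generalized_nystrom_exact
    {m n s t : ℕ}
    (X : Matrix (Fin m) (Fin n) ℝ)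
    (Ω : Matrix (Fin n) (Fin s) ℝ) (Ψ : Matrix (Fin t) (Fin m) ℝ)
    (Y : Matrix (Fin m) (Fin s) ℝ) (Z : Matrix (Fin t) (Fin n) ℝ)
    (hY : Y = X * Ω) (hZ : Z = Ψ * X)
    (P : Matrix (Fin s) (Fin t) ℝ)
    (hP1 : (Ψ * X * Ω) * P * (Ψ * X * Ω) = Ψ * X * Ω)
    (hP2 : P * (Ψ * X * Ω) * P = P)
    (hP3 : ((Ψ * X * Ω) * P)ᵀ = (Ψ * X * Ω) * P)
    (hP4 : (P * (Ψ * X * Ω))ᵀ = P * (Ψ * X * Ω))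
    (hrank : (Ψ * X * Ω).rank = X.rank) :
    X = Y * P * Z := by
  -- rank (X * Ω) = rank X
  have hr1 : (X * Ω).rank = X.rank := by
    refine le_antisymm (Matrix.rank_mul_le_left X Ω) ?_
    calc X.rank = (Ψ * X * Ω).rank := hrank.symm
      _ = (Ψ * (X * Ω)).rank := by rw [Matrix.mul_assoc]
      _ ≤ (X * Ω).rank := Matrix.rank_mul_le_right Ψ (X * Ω)
  -- rank (Ψ * X) = rank X
  have hr2 : (Ψ * X).rank = X.rank := by
    refine le_antisymm (Matrix.rank_mul_le_right Ψ X) ?_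
    calc X.rank = (Ψ * X * Ω).rank := hrank.symm
      _ ≤ (Ψ * X).rank := Matrix.rank_mul_le_left (Ψ * X) Ω
  obtain ⟨W, hW⟩ := factor_of_rank_eq X Ω hr1
  have hr2t : (Xᵀ * Ψᵀ).rank = Xᵀ.rank := by
    rw [← Matrix.transpose_mul, Matrix.rank_transpose, Matrix.rank_transpose, hr2]
  obtain ⟨V', hV'⟩ := factor_of_rank_eq Xᵀ Ψᵀ hr2t
  -- X = V * (Ψ * X) with V = V'ᵀ
  have hV : X = V'ᵀ * (Ψ * X) := by
    have := congrArg Matrix.transpose hV'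
    simpa [Matrix.transpose_mul] using this
  have hA1 : Ψ * X = (Ψ * X * Ω) * W := by
    calc Ψ * X = Ψ * ((X * Ω) * W) := by rw [← hW]
      _ = (Ψ * X * Ω) * W := by rw [← Matrix.mul_assoc, ← Matrix.mul_assoc]
  have hA2 : X * Ω = V'ᵀ * (Ψ * X * Ω) := by
    calc X * Ω = (V'ᵀ * (Ψ * X)) * Ω := by rw [← hV]
      _ = V'ᵀ * (Ψ * X * Ω) := by rw [Matrix.mul_assoc]
  calc X = V'ᵀ * (Ψ * X) := hV
    _ = V'ᵀ * ((Ψ * X * Ω) * W) := by conv_lhs => rw [hA1]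
    _ = V'ᵀ * ((Ψ * X * Ω) * P * (Ψ * X * Ω) * W) := by
        conv_lhs => rw [← hP1]
    _ = (V'ᵀ * (Ψ * X * Ω)) * P * ((Ψ * X * Ω) * W) := by
        simp only [Matrix.mul_assoc]
    _ = Y * P * Z := by rw [← hA2, ← hA1, hY, hZ]
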